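/- Let Γ = Π ⋊ G act on the set U(G,Π) of functions G → Π by ((σ,g)·f)(x) = (g • f(g⁻¹x)) · σ⁻¹. For a subgroup Λ of Γ with Λ ∩ Π = {e} (so Λ = Λ_α for a crossed homomorphism α : H → Π), the Λ-fixed point set U(G,Π)^Λ is nonempty. -/

import Mathlib

theorem stmt9 {G P : Type*} [Group G] [Group P] (φ : G →* MulAut P)
    (Λ : Subgroup (P ⋊[φ] G))
    (hΛ : ∀ σ : P, SemidirectProduct.inl σ ∈ Λ → σ = 1) :
    ∃ f : G → P, ∀ p ∈ Λ,
      (fun x => φ p.right (f (p.right⁻¹ * x)) * p.left⁻¹) = f := by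
  classical
  set H : Subgroup G := Λ.map (SemidirectProduct.rightHom) with hH
  -- uniqueness of the left component
  have huniq : ∀ a b : P ⋊[φ] G, a ∈ Λ → b ∈ Λ → a.right = b.right → a.left = b.left := by
    intro a b ha hb hr
    have h1 : (a * b⁻¹) ∈ Λ := mul_mem ha (inv_mem hb)
    have h2 : (a * b⁻¹).right = 1 := by simp [hr]
    have h3 : SemidirectProduct.inl (a * b⁻¹).left = a * b⁻¹ := by
      ext
      · simp
      · simp [h2]
    have h4 : (a * b⁻¹).left = 1 := hΛ _ (h3 ▸ h1)
    have h5 : (a * b⁻¹).left = a.left * b.left⁻¹ := by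
      rw [SemidirectProduct.mul_left, SemidirectProduct.inv_left, hr, ← MulAut.mul_apply, ← map_mul,
        mul_inv_cancel, map_one, MulAut.one_apply]
    rw [h5] at h4
    group at h4 ⊢
    exact eq_of_div_eq_one (by simpa [div_eq_mul_inv] using h4)
  have hchoice : ∀ x : G, ∃ l : P ⋊[φ] G, l ∈ Λ ∧
      l.right = x * ((QuotientGroup.mk x⁻¹ : G ⧸ H) : G ⧸ H).out := by
    intro x
    have hmem : x * ((QuotientGroup.mk x⁻¹ : G ⧸ H)).out ∈ H := by
      have : (QuotientGroup.mk x⁻¹ : G ⧸ H) = QuotientGroup.mk ((QuotientGroup.mk x⁻¹ : G ⧸ H)).out := by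
        exact (QuotientGroup.out_eq' _).symm
      rw [QuotientGroup.eq] at this
      simpa using this
    rw [hH] at hmem
    obtain ⟨l, hl, hlr⟩ := hmem
    exact ⟨l, hl, hlr⟩
  choose l hlΛ hlr using hchoice
  refine ⟨fun x => (l x).left⁻¹, ?_⟩
  intro p hp
  funext x
  have hpr : p.right ∈ H := ⟨p, hp, rfl⟩
  have hq : (QuotientGroup.mk ((p.right⁻¹ * x)⁻¹) : G ⧸ H) = QuotientGroup.mk x⁻¹ := by
    rw [mul_inv_rev, inv_inv]
    exact QuotientGroup.mk_mul_of_mem _ hpr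
  have hright : (p * l (p.right⁻¹ * x)).right = (l x).right := by
    rw [SemidirectProduct.mul_right, hlr, hlr, hq]
    group
  have hleft := huniq _ _ (mul_mem hp (hlΛ _)) (hlΛ x) hright
  rw [SemidirectProduct.mul_left] at hleft
  have : φ p.right ((l (p.right⁻¹ * x)).left⁻¹) * p.left⁻¹ = (l x).left⁻¹ := by
    rw [← hleft]
    simp [mul_inv_rev]
  simpa using this
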